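/- Fix μ real, c > 0, and ν = μ + is with s real, s ≠ 0. Define g(r) = Σ_{j≥1} d_j¹ C_j Σ_{l=0}^{j-1} C(2j,2l+1) r^l, where d_j¹ = 2^{ν-2j}/(j! Γ(j+1-ν)) and |C_j| ≤ c^j. Then for every p ∈ ℕ and 0 < r ≤ 1, |∂_r^p g(r)| ≤ C e^{π|s|} with C depending only on μ, c, and p. -/

import Mathlib

open Complex Finset

lemma my_abs_Gamma_le {z : ℂ} (hz : 0 < z.re) :
    ‖Complex.Gamma z‖ ≤ Real.Gamma z.re := by
  rw [Complex.Gamma_eq_integral hz, Real.Gamma_eq_integral hz, Complex.GammaIntegral]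
  refine le_trans (MeasureTheory.norm_integral_le_integral_norm _) (le_of_eq ?_)
  refine MeasureTheory.setIntegral_congr_fun measurableSet_Ioi fun x hx => ?_
  have hx' : (0:ℝ) < x := hx
  rw [norm_mul, Complex.norm_real, Real.norm_eq_abs,
    norm_cpow_eq_rpow_re_of_pos hx']
  simp [abs_of_pos (Real.exp_pos _), Complex.sub_re]

lemma my_abs_sin_le (z : ℂ) : ‖Complex.sin z‖ ≤ Real.exp |z.im| := by
  rw [Complex.sin]
  rw [norm_div, norm_mul, Complex.norm_I, mul_one]
  have h1 : ‖Complex.exp (-z * I) - Complex.exp (z * I)‖ ≤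
      Real.exp z.im + Real.exp (-z.im) := by
    refine le_trans (norm_sub_le _ _) ?_
    have e1 : ‖Complex.exp (-z * I)‖ = Real.exp z.im := by
      rw [Complex.norm_exp]; congr 1; simp
    have e2 : ‖Complex.exp (z * I)‖ = Real.exp (-z.im) := by
      rw [Complex.norm_exp]; congr 1; simp
    rw [e1, e2]
  have h2 : Real.exp z.im ≤ Real.exp |z.im| := Real.exp_le_exp.2 (le_abs_self _)
  have h3 : Real.exp (-z.im) ≤ Real.exp |z.im| := Real.exp_le_exp.2 (neg_le_abs _)
  have h2' : ‖(2:ℂ)‖ = 2 := by norm_num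
  rw [h2', div_le_iff₀ (by norm_num : (0:ℝ) < 2)]
  linarith

lemma my_Gamma_shift (w : ℂ) (hw : w.im ≠ 0) (m : ℕ) :
    Complex.Gamma (w + m) = Complex.Gamma w * ∏ k ∈ Finset.range m, (w + k) := by
  induction m with
  | zero => simp
  | succ n ih =>
    have hwn : w + n ≠ 0 := by
      intro h
      apply hw
      have := congrArg Complex.im h
      simpa using this
    have hcast : w + ((n+1 : ℕ) : ℂ) = (w + n) + 1 := by push_cast; ring
    rw [hcast, Complex.Gamma_add_one _ hwn, ih, Finset.prod_range_succ]
    ring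

lemma one_div_Gamma_bound (x : ℝ) :
    ∃ M : ℝ, 0 ≤ M ∧ ∀ y : ℝ,
      (‖Complex.Gamma (x + y * I)‖)⁻¹ ≤ M * Real.exp (Real.pi * |y|) := by
  have hcont : Continuous fun y : ℝ => (Complex.Gamma ((x : ℂ) + y * I))⁻¹ :=
    Complex.differentiable_one_div_Gamma.continuous.comp
      (continuous_const.add (Complex.continuous_ofReal.mul continuous_const))
  obtain ⟨M₁, hM₁⟩ := (isCompact_Icc (a := (-1:ℝ)) (b := 1)).exists_bound_of_continuousOn
    hcont.continuousOn
  have hM₁0 : 0 ≤ M₁ := le_trans (norm_nonneg _) (hM₁ 0 (by norm_num))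
  set m : ℕ := Nat.ceil x with hm
  set M₂ : ℝ := Real.Gamma (1 - x + m) with hM₂def
  have hrepos : (0:ℝ) < 1 - x + m := by
    have := Nat.le_ceil x
    rw [← hm] at this
    linarith
  have hM₂0 : 0 ≤ M₂ := (Real.Gamma_pos_of_pos hrepos).le
  refine ⟨max M₁ M₂, le_trans hM₁0 (le_max_left _ _), fun y => ?_⟩
  have hexp1 : (1:ℝ) ≤ Real.exp (Real.pi * |y|) :=
    Real.one_le_exp (by positivity)
  rcases le_or_gt |y| 1 with hy | hy
  · have hmem : y ∈ Set.Icc (-1:ℝ) 1 := by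
      constructor <;> [linarith [neg_abs_le y]; linarith [le_abs_self y]]
    have := hM₁ y hmem
    rw [norm_inv] at this
    calc (‖Complex.Gamma (x + y * I)‖)⁻¹ ≤ M₁ := this
      _ ≤ max M₁ M₂ * 1 := by rw [mul_one]; exact le_max_left _ _
      _ ≤ max M₁ M₂ * Real.exp (Real.pi * |y|) := by
          exact mul_le_mul_of_nonneg_left hexp1 (le_trans hM₁0 (le_max_left _ _))
  · -- |y| > 1
    set z : ℂ := (x : ℂ) + y * I with hz
    have hzim : z.im = y := by simp [hz]
    have hzre : z.re = x := by simp [hz]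
    have hyne : y ≠ 0 := by
      intro h; rw [h] at hy; simp at hy; linarith
    have hΓ : Complex.Gamma z ≠ 0 := by
      refine Complex.Gamma_ne_zero fun n => ?_
      intro h
      apply hyne
      have := congrArg Complex.im h
      simpa [hzim] using this
    have hπ : (Real.pi : ℂ) ≠ 0 := Complex.ofReal_ne_zero.mpr Real.pi_ne_zero
    have hsin : Complex.sin ((Real.pi : ℂ) * z) ≠ 0 := by
      simp only [Ne, Complex.sin_eq_zero_iff, not_exists]
      intro k hk
      apply hyne
      have := congrArg Complex.im hk
      simp [hzim] at this
      exact this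
    have h0 := Complex.Gamma_mul_Gamma_one_sub z
    have key : (Complex.Gamma z)⁻¹ =
        Complex.Gamma (1 - z) * Complex.sin ((Real.pi : ℂ) * z) / (Real.pi : ℂ) := by
      rw [eq_div_iff hπ]
      rw [eq_div_iff hsin] at h0
      linear_combination (-(Complex.Gamma z)⁻¹) * h0
        + Complex.Gamma (1 - z) * Complex.sin ((Real.pi : ℂ) * z) * (inv_mul_cancel₀ hΓ)
    have habs : (‖Complex.Gamma z‖)⁻¹ =
        ‖Complex.Gamma (1 - z)‖ * ‖Complex.sin ((Real.pi:ℂ) * z)‖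
          / Real.pi := by
      rw [← norm_inv, key, norm_div, norm_mul, Complex.norm_real, Real.norm_eq_abs,
        abs_of_pos Real.pi_pos]
    -- bound Gamma (1 - z)
    have hwim : (1 - z).im = -y := by simp [hzim]
    have hwim' : (1 - z).im ≠ 0 := by rw [hwim]; exact neg_ne_zero.mpr hyne
    have hsh := my_Gamma_shift (1 - z) hwim' m
    have hprod : (1:ℝ) ≤ ∏ k ∈ Finset.range m, ‖(1 - z) + k‖ := by
      calc (1:ℝ) = ∏ _k ∈ Finset.range m, (1:ℝ) := by simp
        _ ≤ ∏ k ∈ Finset.range m, ‖(1 - z) + k‖ :=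
          Finset.prod_le_prod (fun _ _ => zero_le_one) (fun k _ => ?_)
      calc (1:ℝ) ≤ |y| := hy.le
        _ = |((1 - z) + (k:ℂ)).im| := by simp [hwim]
        _ ≤ ‖(1 - z) + k‖ := Complex.abs_im_le_norm _
    have hGw : ‖Complex.Gamma (1 - z)‖ ≤ ‖Complex.Gamma (1 - z + m)‖ := by
      rw [hsh, norm_mul]
      nth_rewrite 1 [← mul_one (‖Complex.Gamma (1-z)‖)]
      rw [norm_prod]
      exact mul_le_mul_of_nonneg_left hprod (norm_nonneg _)
    have hre : (1 - z + (m:ℂ)).re = 1 - x + m := by simp [hzre]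
    have hGw2 : ‖Complex.Gamma (1 - z + m)‖ ≤ M₂ := by
      have := my_abs_Gamma_le (z := 1 - z + m) (by rw [hre]; exact hrepos)
      rwa [hre] at this
    have hsinb : ‖Complex.sin ((Real.pi:ℂ) * z)‖ ≤ Real.exp (Real.pi * |y|) := by
      have := my_abs_sin_le ((Real.pi:ℂ) * z)
      have him : ((Real.pi:ℂ) * z).im = Real.pi * y := by
        simp [Complex.mul_im, hzim]
      rw [him] at this
      rwa [abs_mul, abs_of_pos Real.pi_pos] at this
    calc (‖Complex.Gamma ((x:ℂ) + y * I)‖)⁻¹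
        = ‖Complex.Gamma (1 - z)‖ * ‖Complex.sin ((Real.pi:ℂ) * z)‖
          / Real.pi := habs
      _ ≤ M₂ * Real.exp (Real.pi * |y|) / Real.pi := by
          exact (div_le_div_iff_of_pos_right Real.pi_pos).mpr
            (mul_le_mul (hGw.trans hGw2) hsinb (norm_nonneg _) hM₂0)
      _ ≤ M₂ * Real.exp (Real.pi * |y|) := by
          apply div_le_self (by positivity) (by linarith [Real.pi_gt_three])
      _ ≤ max M₁ M₂ * Real.exp (Real.pi * |y|) := by
          exact mul_le_mul_of_nonneg_right (le_max_right _ _) (Real.exp_pos _).le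

lemma inv_Gamma_uniform_bound (μ : ℝ) :
    ∃ M : ℝ, 0 ≤ M ∧ ∀ (j : ℕ) (s : ℝ), s ≠ 0 →
      (‖Complex.Gamma (((j : ℂ) + 1) + 1 - ((μ : ℂ) + (s : ℂ) * I))‖)⁻¹
        ≤ M * Real.exp (Real.pi * |s|) := by
  classical
  set j₀ : ℕ := Nat.ceil |μ| with hj₀
  choose Mf hMf0 hMf using one_div_Gamma_bound
  set M : ℝ := ∑ i ∈ Finset.range (j₀ + 1), Mf ((i : ℝ) + 2 - μ) with hMdef
  have hMnn : 0 ≤ M := Finset.sum_nonneg fun i _ => hMf0 _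
  have hle : ∀ i : ℕ, i ∈ Finset.range (j₀ + 1) → Mf ((i : ℝ) + 2 - μ) ≤ M :=
    fun i hi => Finset.single_le_sum (f := fun i : ℕ => Mf ((i : ℝ) + 2 - μ)) (fun i _ => hMf0 _) hi
  refine ⟨M, hMnn, fun j s hs => ?_⟩
  have hcast : ∀ i : ℕ, ((i : ℂ) + 1) + 1 - ((μ : ℂ) + (s : ℂ) * I)
      = (((i : ℝ) + 2 - μ : ℝ) : ℂ) + ((-s : ℝ) : ℂ) * I := by
    intro i; push_cast; ring
  have habs : |(-s : ℝ)| = |s| := abs_neg s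
  rcases le_or_gt j j₀ with hj | hj
  · rw [hcast j]
    calc (‖Complex.Gamma ((((j : ℝ) + 2 - μ : ℝ) : ℂ) + ((-s : ℝ) : ℂ) * I)‖)⁻¹
        ≤ Mf ((j : ℝ) + 2 - μ) * Real.exp (Real.pi * |(-s : ℝ)|) := hMf _ _
      _ ≤ M * Real.exp (Real.pi * |s|) := by
          rw [habs]
          exact mul_le_mul_of_nonneg_right
            (hle j (Finset.mem_range.mpr (by omega))) (Real.exp_pos _).le
  · -- j > j₀ : reduce to j₀
    set w : ℂ := ((j₀ : ℂ) + 1) + 1 - ((μ : ℂ) + (s : ℂ) * I) with hw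
    have hwim : w.im = -s := by simp [hw]
    have hwim' : w.im ≠ 0 := by rw [hwim]; exact neg_ne_zero.mpr hs
    have hΓw : Complex.Gamma w ≠ 0 := by
      refine Complex.Gamma_ne_zero fun n => ?_
      intro h
      apply hs
      have := congrArg Complex.im h
      rw [hwim] at this
      simpa using this
    have hwre : w.re = (j₀ : ℝ) + 2 - μ := by simp [hw]; ring
    have hsum : w + ((j - j₀ : ℕ) : ℂ) = ((j : ℂ) + 1) + 1 - ((μ : ℂ) + (s : ℂ) * I) := by
      rw [hw]
      have : ((j - j₀ : ℕ) : ℂ) = (j : ℂ) - (j₀ : ℂ) := by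
        push_cast [Nat.cast_sub hj.le]; ring
      rw [this]; ring
    have hsh := my_Gamma_shift w hwim' (j - j₀)
    rw [hsum] at hsh
    have hprod : (1:ℝ) ≤ ∏ k ∈ Finset.range (j - j₀), ‖w + k‖ := by
      calc (1:ℝ) = ∏ _k ∈ Finset.range (j - j₀), (1:ℝ) := by simp
        _ ≤ ∏ k ∈ Finset.range (j - j₀), ‖w + k‖ :=
          Finset.prod_le_prod (fun _ _ => zero_le_one) (fun k _ => ?_)
      calc (1:ℝ) ≤ (w + (k : ℂ)).re := by
            rw [Complex.add_re, hwre]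
            simp only [Complex.natCast_re]
            have h1 : (0:ℝ) ≤ (j₀ : ℝ) - |μ| := by
              have := Nat.le_ceil |μ|; rw [← hj₀] at this; linarith
            have h2 : μ ≤ |μ| := le_abs_self μ
            have h3 : (0:ℝ) ≤ (k : ℝ) := Nat.cast_nonneg k
            linarith
        _ ≤ ‖w + k‖ := Complex.re_le_norm _
    have hΓmono : ‖Complex.Gamma w‖
        ≤ ‖Complex.Gamma (((j : ℂ) + 1) + 1 - ((μ : ℂ) + (s : ℂ) * I))‖ := by
      rw [hsh, norm_mul, norm_prod]
      nth_rewrite 1 [← mul_one (‖Complex.Gamma w‖)]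
      exact mul_le_mul_of_nonneg_left hprod (norm_nonneg _)
    have hpos : 0 < ‖Complex.Gamma w‖ :=
      norm_pos_iff.mpr hΓw
    calc (‖Complex.Gamma (((j : ℂ) + 1) + 1 - ((μ : ℂ) + (s : ℂ) * I))‖)⁻¹
        ≤ (‖Complex.Gamma w‖)⁻¹ := by
          exact inv_anti₀ hpos hΓmono
      _ ≤ Mf ((j₀ : ℝ) + 2 - μ) * Real.exp (Real.pi * |s|) := by
          rw [hw, hcast j₀]
          have := hMf ((j₀ : ℝ) + 2 - μ) (-s)
          rwa [habs] at this
      _ ≤ M * Real.exp (Real.pi * |s|) :=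
          mul_le_mul_of_nonneg_right (hle j₀ (Finset.mem_range.mpr (by omega)))
            (Real.exp_pos _).le

lemma my_iteratedDeriv_comp_ofReal {F : ℂ → ℂ} (hF : Differentiable ℂ F) (n : ℕ) (x : ℝ) :
    iteratedDeriv n (fun t : ℝ => F t) x = iteratedDeriv n F x := by
  induction n generalizing x with
  | zero => simp
  | succ n ih =>
    have hD : Differentiable ℂ (iteratedDeriv n F) := by
      rw [iteratedDeriv_eq_iterate]
      exact ((hF.contDiff (n := (⊤ : ℕ∞))).iterate_deriv n).differentiable (by simp)
    rw [iteratedDeriv_succ, iteratedDeriv_succ]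
    have hfun : iteratedDeriv n (fun t : ℝ => F t) = fun t : ℝ => iteratedDeriv n F t :=
      funext ih
    rw [hfun]
    exact ((hD (x : ℂ)).hasDerivAt.comp_ofReal).deriv

theorem series_g_deriv_bound (μ c : ℝ) (hc : 0 < c) (p : ℕ) :
    ∃ C : ℝ, ∀ Cseq : ℕ → ℂ, (∀ j : ℕ, ‖Cseq j‖ ≤ c ^ j) →
      ∀ s : ℝ, s ≠ 0 → ∀ r : ℝ, 0 < r → r ≤ 1 →
        ‖iteratedDeriv p
          (fun r : ℝ => ∑' j : ℕ,
            (2 : ℂ) ^ (((μ : ℂ) + s * Complex.I) - 2 * (j + 1))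
              / (((j + 1 : ℕ)).factorial
                  * Complex.Gamma (((j : ℂ) + 1) + 1 - ((μ : ℂ) + s * Complex.I)))
              * Cseq (j + 1)
              * ∑ l ∈ Finset.range (j + 1),
                  (Nat.choose (2 * (j + 1)) (2 * l + 1) : ℂ) * (r : ℂ) ^ l) r‖
          ≤ C * Real.exp (Real.pi * |s|) := by
  obtain ⟨M, hM0, hM⟩ := inv_Gamma_uniform_bound μ
  set W : ℝ := ∑' j : ℕ, (2 * c * 2) ^ (j + 1) / ((j + 1).factorial : ℝ) with hWdef
  refine ⟨(p.factorial : ℝ) * ((2 : ℝ) ^ μ * M * W), ?_⟩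
  intro Cseq hC s hs r hr hr1
  set F : ℂ → ℂ := fun z : ℂ => ∑' j : ℕ,
      (2 : ℂ) ^ (((μ : ℂ) + s * Complex.I) - 2 * (j + 1))
        / (((j + 1 : ℕ)).factorial
            * Complex.Gamma (((j : ℂ) + 1) + 1 - ((μ : ℂ) + s * Complex.I)))
        * Cseq (j + 1)
        * ∑ l ∈ Finset.range (j + 1),
            (Nat.choose (2 * (j + 1)) (2 * l + 1) : ℂ) * z ^ l with hFdef
  -- term bound
  have hterm : ∀ B : ℝ, 1 ≤ B → ∀ (j : ℕ) (z : ℂ), ‖z‖ ≤ B →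
      ‖(2 : ℂ) ^ (((μ : ℂ) + s * Complex.I) - 2 * (j + 1))
        / (((j + 1 : ℕ)).factorial
            * Complex.Gamma (((j : ℂ) + 1) + 1 - ((μ : ℂ) + s * Complex.I)))
        * Cseq (j + 1)
        * ∑ l ∈ Finset.range (j + 1),
            (Nat.choose (2 * (j + 1)) (2 * l + 1) : ℂ) * z ^ l‖
      ≤ (2 : ℝ) ^ μ * M * Real.exp (Real.pi * |s|)
          * ((2 * c * B) ^ (j + 1) / ((j + 1).factorial : ℝ)) := by
    intro B hB j z hz
    have hBpos : (0:ℝ) < B := lt_of_lt_of_le one_pos hB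
    -- abs of the power of 2
    have hA : ‖(2 : ℂ) ^ (((μ : ℂ) + s * Complex.I) - 2 * ((j : ℂ) + 1))‖
        = (2 : ℝ) ^ μ / 4 ^ (j + 1) := by
      have h2 : (2 : ℂ) = ((2 : ℝ) : ℂ) := by norm_num
      rw [h2, norm_cpow_eq_rpow_re_of_pos two_pos]
      have hre : (((μ : ℂ) + s * Complex.I) - ((2:ℝ):ℂ) * ((j : ℂ) + 1)).re
          = μ - ((2 * j + 2 : ℕ) : ℝ) := by
        simp [Complex.sub_re, Complex.add_re, Complex.mul_re]
        push_cast; ring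
      rw [hre, Real.rpow_sub two_pos, Real.rpow_natCast]
      congr 1
      rw [show 2 * j + 2 = 2 * (j + 1) by ring, pow_mul]
      norm_num
    -- abs of denominator
    have hD : ‖(((j + 1 : ℕ)).factorial : ℂ)
        * Complex.Gamma (((j : ℂ) + 1) + 1 - ((μ : ℂ) + s * Complex.I))‖
        = ((j + 1).factorial : ℝ)
          * ‖Complex.Gamma (((j : ℂ) + 1) + 1 - ((μ : ℂ) + s * Complex.I))‖ := by
      rw [norm_mul, Complex.norm_natCast]
    -- bound on the polynomial sum
    have hS : ‖∑ l ∈ Finset.range (j + 1),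
        (Nat.choose (2 * (j + 1)) (2 * l + 1) : ℂ) * z ^ l‖
        ≤ 2 ^ (j + 1) * (4 ^ (j + 1) * B ^ (j + 1)) := by
      have hchoose : ∀ l : ℕ, l ∈ Finset.range (j + 1) →
          ((Nat.choose (2 * (j + 1)) (2 * l + 1) : ℝ)) ≤ (4 : ℝ) ^ (j + 1) := by
        intro l hl
        have hmem : 2 * l + 1 ∈ Finset.range (2 * (j + 1) + 1) := by
          rw [Finset.mem_range] at hl ⊢; omega
        have := Finset.single_le_sum
          (f := fun i => Nat.choose (2 * (j + 1)) i) (fun i _ => Nat.zero_le _) hmem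
        rw [Nat.sum_range_choose] at this
        calc ((Nat.choose (2 * (j + 1)) (2 * l + 1) : ℝ))
            ≤ (2:ℝ) ^ (2 * (j + 1)) := by exact_mod_cast this
          _ = (4:ℝ) ^ (j + 1) := by rw [pow_mul]; norm_num
      calc ‖∑ l ∈ Finset.range (j + 1),
              (Nat.choose (2 * (j + 1)) (2 * l + 1) : ℂ) * z ^ l‖
          ≤ ∑ l ∈ Finset.range (j + 1), ‖(Nat.choose (2 * (j + 1)) (2 * l + 1) : ℂ) * z ^ l‖ :=
            norm_sum_le _ _
        _ ≤ ∑ _l ∈ Finset.range (j + 1), (4 : ℝ) ^ (j + 1) * B ^ (j + 1) := by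
            refine Finset.sum_le_sum fun l hl => ?_
            rw [norm_mul, Complex.norm_natCast, norm_pow]
            have hzl : ‖z‖ ^ l ≤ B ^ (j + 1) := by
              calc ‖z‖ ^ l ≤ B ^ l :=
                    pow_le_pow_left₀ (norm_nonneg z) hz l
                _ ≤ B ^ (j + 1) := by
                    apply pow_le_pow_right₀ hB
                    rw [Finset.mem_range] at hl; omega
            exact mul_le_mul (hchoose l hl) hzl (by positivity) (by positivity)
        _ = ((j + 1 : ℕ) : ℝ) * ((4 : ℝ) ^ (j + 1) * B ^ (j + 1)) := by
            rw [Finset.sum_const, Finset.card_range, nsmul_eq_mul]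
        _ ≤ 2 ^ (j + 1) * (4 ^ (j + 1) * B ^ (j + 1)) := by
            refine mul_le_mul_of_nonneg_right ?_ (by positivity)
            exact_mod_cast (Nat.lt_two_pow_self (n := j + 1)).le
    -- Gamma factor bound
    have hG := hM j s hs
    have hGnn : (0:ℝ) ≤ (‖Complex.Gamma (((j : ℂ) + 1) + 1
        - ((μ : ℂ) + (s : ℂ) * I))‖)⁻¹ := inv_nonneg.mpr (norm_nonneg _)
    -- assemble
    have hfac : (0:ℝ) < ((j + 1).factorial : ℝ) := by
      exact_mod_cast Nat.factorial_pos (j + 1)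
    rw [norm_mul, norm_mul, norm_div, hA, hD, div_eq_mul_inv ((2:ℝ)^μ / 4^(j+1)), mul_inv]
    calc (2:ℝ)^μ / 4^(j+1) * ((((j + 1).factorial : ℝ))⁻¹
          * (‖Complex.Gamma (((j : ℂ) + 1) + 1 - ((μ : ℂ) + s * Complex.I))‖)⁻¹)
          * ‖Cseq (j + 1)‖
          * ‖∑ l ∈ Finset.range (j + 1),
              (Nat.choose (2 * (j + 1)) (2 * l + 1) : ℂ) * z ^ l‖
        ≤ (2:ℝ)^μ / 4^(j+1) * ((((j + 1).factorial : ℝ))⁻¹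
            * (M * Real.exp (Real.pi * |s|)))
            * (c ^ (j + 1))
            * (2 ^ (j + 1) * (4 ^ (j + 1) * B ^ (j + 1))) := by
          gcongr <;> first | exact hG | exact hC (j + 1) | exact hS
      _ = (2 : ℝ) ^ μ * M * Real.exp (Real.pi * |s|)
            * ((2 * c * B) ^ (j + 1) / ((j + 1).factorial : ℝ)) := by
          field_simp
          ring
  -- summability of the bounding series
  have hsummable : ∀ B : ℝ, Summable (fun j : ℕ =>
      (2 : ℝ) ^ μ * M * Real.exp (Real.pi * |s|)
        * ((2 * c * B) ^ (j + 1) / ((j + 1).factorial : ℝ))) := by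
    intro B
    apply Summable.mul_left
    have := (Real.summable_pow_div_factorial (2 * c * B)).comp_injective
      (Nat.succ_injective)
    exact this
  -- each term is an entire function of z
  have hdiffterm : ∀ j : ℕ, Differentiable ℂ (fun z : ℂ =>
      (2 : ℂ) ^ (((μ : ℂ) + s * Complex.I) - 2 * ((j:ℂ) + 1))
        / (((j + 1 : ℕ)).factorial
            * Complex.Gamma (((j : ℂ) + 1) + 1 - ((μ : ℂ) + s * Complex.I)))
        * Cseq (j + 1)
        * ∑ l ∈ Finset.range (j + 1),
            (Nat.choose (2 * (j + 1)) (2 * l + 1) : ℂ) * z ^ l) := by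
    intro j
    exact Differentiable.const_mul
      (Differentiable.fun_sum fun l _ => (differentiable_pow l).const_mul _) _
  -- F is entire
  have hFdiff : Differentiable ℂ F := by
    intro z
    have hR : (1:ℝ) ≤ ‖z‖ + 1 := by
      have := norm_nonneg z; linarith
    have hd := differentiableOn_tsum_of_summable_norm
      (hsummable (‖z‖ + 1))
      (fun j => (hdiffterm j).differentiableOn)
      (Metric.isOpen_ball (x := (0:ℂ)) (ε := ‖z‖ + 1))
      (fun j w hw => by
        refine hterm _ hR j w ?_
        rw [Metric.mem_ball, Complex.dist_eq, sub_zero] at hw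
        exact hw.le)
    have hmem : z ∈ Metric.ball (0:ℂ) (‖z‖ + 1) := by
      rw [Metric.mem_ball, Complex.dist_eq, sub_zero]; linarith
    have := (hd z hmem).differentiableAt (Metric.isOpen_ball.mem_nhds hmem)
    rw [hFdef]
    exact this
  have hFcont : Continuous F := hFdiff.continuous
  -- replace the real iterated derivative by the complex one
  have hshow : (fun r : ℝ => ∑' j : ℕ,
      (2 : ℂ) ^ (((μ : ℂ) + s * Complex.I) - 2 * (j + 1))
        / (((j + 1 : ℕ)).factorial
            * Complex.Gamma (((j : ℂ) + 1) + 1 - ((μ : ℂ) + s * Complex.I)))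
        * Cseq (j + 1)
        * ∑ l ∈ Finset.range (j + 1),
            (Nat.choose (2 * (j + 1)) (2 * l + 1) : ℂ) * (r : ℂ) ^ l)
      = fun t : ℝ => F t := by rw [hFdef]
  rw [hshow, my_iteratedDeriv_comp_ofReal hFdiff p r]
  -- Cauchy estimates
  have hps : HasFPowerSeriesOnBall F (cauchyPowerSeries F (r:ℂ) ((1:NNReal):ℝ)) (r:ℂ) ⊤ :=
    hFdiff.hasFPowerSeriesOnBall (r:ℂ) one_pos
  have hkey := hps.factorial_smul (1:ℂ) p
  have h1 : ‖iteratedDeriv p F (r:ℂ)‖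
      = (p.factorial : ℝ) * ‖cauchyPowerSeries F (r:ℂ) ((1:NNReal):ℝ) p fun _ => (1:ℂ)‖ := by
    rw [iteratedDeriv_eq_iteratedFDeriv]
    rw [show iteratedFDeriv ℂ p F (r:ℂ) (fun _ => 1)
        = p.factorial • (cauchyPowerSeries F (r:ℂ) ((1:NNReal):ℝ) p fun _ => (1:ℂ)) from hkey.symm]
    rw [nsmul_eq_mul, norm_mul]
    congr 1
    rw [Complex.norm_natCast]
  have h2 : ‖cauchyPowerSeries F (r:ℂ) ((1:NNReal):ℝ) p fun _ => (1:ℂ)‖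
      ≤ ‖cauchyPowerSeries F (r:ℂ) ((1:NNReal):ℝ) p‖ := by
    have := (cauchyPowerSeries F (r:ℂ) ((1:NNReal):ℝ) p).le_opNorm (fun _ => (1:ℂ))
    simpa using this
  set S : ℝ := (2 : ℝ) ^ μ * M * Real.exp (Real.pi * |s|) * W with hSdef
  have hW0 : 0 ≤ W := by
    rw [hWdef]
    refine tsum_nonneg fun j => ?_
    positivity
  -- bound of F on the circle of radius 1 around r
  have hcirc : ∀ θ : ℝ, ‖F (circleMap (r:ℂ) 1 θ)‖ ≤ S := by
    intro θ
    have hzb : ‖circleMap (r:ℂ) 1 θ‖ ≤ 2 := by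
      have hmem := circleMap_mem_closedBall (r:ℂ) zero_le_one θ
      rw [Metric.mem_closedBall, Complex.dist_eq] at hmem
      calc ‖circleMap (r:ℂ) 1 θ‖
          ≤ ‖circleMap (r:ℂ) 1 θ - (r:ℂ)‖ + ‖(r:ℂ)‖ := by
            have := norm_sub_le (circleMap (r:ℂ) 1 θ) (r:ℂ)
            calc ‖circleMap (r:ℂ) 1 θ‖
                = ‖(circleMap (r:ℂ) 1 θ - (r:ℂ)) + (r:ℂ)‖ := by ring_nf
              _ ≤ _ := norm_add_le _ _
        _ ≤ 1 + 1 := by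
            have habs : ‖(r:ℂ)‖ = r := by
              rw [Complex.norm_real, Real.norm_eq_abs, abs_of_pos hr]
            exact add_le_add hmem (by rw [habs]; exact hr1)
        _ = 2 := by norm_num
    have hF_eq : F (circleMap (r:ℂ) 1 θ) = ∑' j : ℕ,
        (2 : ℂ) ^ (((μ : ℂ) + s * Complex.I) - 2 * ((j:ℂ) + 1))
          / (((j + 1 : ℕ)).factorial
              * Complex.Gamma (((j : ℂ) + 1) + 1 - ((μ : ℂ) + s * Complex.I)))
          * Cseq (j + 1)
          * ∑ l ∈ Finset.range (j + 1),
              (Nat.choose (2 * (j + 1)) (2 * l + 1) : ℂ) * (circleMap (r:ℂ) 1 θ) ^ l := by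
      rw [hFdef]
    rw [hF_eq]
    refine le_trans (tsum_of_norm_bounded ((hsummable 2).hasSum) fun j => ?_) ?_
    · exact hterm 2 one_le_two j _ hzb
    · rw [hSdef, hWdef, ← tsum_mul_left]
  -- integrate
  have hcontI : Continuous fun θ : ℝ => ‖F (circleMap (r:ℂ) 1 θ)‖ :=
    (hFcont.comp (continuous_circleMap _ _)).norm
  have hint : ∫ θ in (0:ℝ)..2 * Real.pi, ‖F (circleMap (r:ℂ) 1 θ)‖ ≤ 2 * Real.pi * S := by
    calc ∫ θ in (0:ℝ)..2 * Real.pi, ‖F (circleMap (r:ℂ) 1 θ)‖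
        ≤ ∫ _θ in (0:ℝ)..2 * Real.pi, S :=
          intervalIntegral.integral_mono_on Real.two_pi_pos.le
            (hcontI.intervalIntegrable _ _) intervalIntegrable_const
            (fun θ _ => hcirc θ)
      _ = 2 * Real.pi * S := by
          rw [intervalIntegral.integral_const, smul_eq_mul]; ring
  have h3 := norm_cauchyPowerSeries_le F (r:ℂ) ((1:NNReal):ℝ) p
  have h4 : ‖cauchyPowerSeries F (r:ℂ) ((1:NNReal):ℝ) p‖ ≤ S := by
    refine le_trans h3 ?_
    have hone : |((1:NNReal):ℝ)|⁻¹ ^ p = 1 := by norm_num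
    rw [hone, mul_one]
    calc (2 * Real.pi)⁻¹ * ∫ θ in (0:ℝ)..2 * Real.pi, ‖F (circleMap (r:ℂ) 1 θ)‖
        ≤ (2 * Real.pi)⁻¹ * (2 * Real.pi * S) := by
          exact mul_le_mul_of_nonneg_left hint (by positivity)
      _ = S := by
          field_simp
  calc ‖iteratedDeriv p F (r:ℂ)‖
      = (p.factorial : ℝ) * ‖cauchyPowerSeries F (r:ℂ) ((1:NNReal):ℝ) p fun _ => (1:ℂ)‖ := h1
    _ ≤ (p.factorial : ℝ) * S :=
        mul_le_mul_of_nonneg_left (h2.trans h4) (Nat.cast_nonneg _)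
    _ = (p.factorial : ℝ) * ((2 : ℝ) ^ μ * M * W) * Real.exp (Real.pi * |s|) := by
        rw [hSdef]; ring
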